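/- For every real number q, the function y ↦ (e^{qy} − 1 − q(e^y − 1))·e^{−y}/(e^y − 1)² is Lebesgue integrable on the interval (−ln 2, ∞) if and only if q < 3. -/

import Mathlib

open MeasureTheory Real Set

private lemma den_lb {y : ℝ} (hy : -Real.log 2 ≤ y) : y ^ 2 / 4 ≤ (Real.exp y - 1) ^ 2 := by
  have h2 : |y| / 2 ≤ |Real.exp y - 1| := by
    rcases le_or_gt 0 y with h | h
    · rw [abs_of_nonneg h,
        abs_of_nonneg (by nlinarith [Real.add_one_le_exp y] : (0:ℝ) ≤ Real.exp y - 1)]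
      nlinarith [Real.add_one_le_exp y]
    · have he : (1:ℝ)/2 ≤ Real.exp y := by
        have h' : Real.exp (-Real.log 2) ≤ Real.exp y := Real.exp_le_exp.2 hy
        rw [Real.exp_neg, Real.exp_log (by norm_num : (0:ℝ) < 2)] at h'
        linarith
      have hm : Real.exp (-y) * Real.exp y = 1 := by rw [← Real.exp_add]; simp
      have key : -y * Real.exp y ≤ 1 - Real.exp y := by
        nlinarith [Real.add_one_le_exp (-y), Real.exp_pos y, hm]
      have hlt : Real.exp y - 1 < 0 := by
        have : Real.exp y < 1 := by
          rw [← Real.exp_zero]; exact Real.exp_lt_exp.2 h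
        linarith
      rw [abs_of_neg h, abs_of_neg hlt]
      nlinarith
  calc y ^ 2 / 4 = (|y| / 2) ^ 2 := by rw [div_pow, sq_abs]; norm_num
    _ ≤ |Real.exp y - 1| ^ 2 := pow_le_pow_left₀ (by positivity) h2 2
    _ = (Real.exp y - 1) ^ 2 := sq_abs _

private lemma meas_f (q : ℝ) :
    Measurable (fun y : ℝ =>
      (Real.exp (q * y) - 1 - q * (Real.exp y - 1)) * Real.exp (-y) / (Real.exp y - 1) ^ 2) := by
  fun_prop

private lemma int_near (q : ℝ) :
    IntegrableOn
      (fun y : ℝ =>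
        (Real.exp (q * y) - 1 - q * (Real.exp y - 1)) * Real.exp (-y) / (Real.exp y - 1) ^ 2)
      (Set.Ioc (-Real.log 2) 1) := by
  obtain ⟨δ, hδdef⟩ : ∃ d : ℝ, d = 1 / (|q| + 1) := ⟨_, rfl⟩
  have hδ : 0 < δ := by rw [hδdef]; positivity
  have hδ1 : δ ≤ 1 := by
    rw [hδdef, div_le_one (by positivity)]
    nlinarith [abs_nonneg q]
  obtain ⟨N, hNdef⟩ : ∃ n : ℝ, n = Real.exp |q| + 1 + |q| * (Real.exp 1 + 1) := ⟨_, rfl⟩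
  have hN : 0 < N := by rw [hNdef]; positivity
  obtain ⟨K, hKdef⟩ : ∃ k : ℝ, k = 8 * (q ^ 2 + |q|) + 8 * N / δ ^ 2 := ⟨_, rfl⟩
  have hK2 : 8 * (q ^ 2 + |q|) ≤ K := by
    rw [hKdef]
    have : 0 ≤ 8 * N / δ ^ 2 := by positivity
    linarith
  have hK3 : 8 * N / δ ^ 2 ≤ K := by
    rw [hKdef]
    nlinarith [abs_nonneg q, sq_nonneg q]
  have hK : 0 ≤ K := le_trans (by positivity) hK3
  refine Integrable.mono' (g := fun _ => K)
    (integrableOn_const measure_Ioc_lt_top.ne)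
    ((meas_f q).aestronglyMeasurable) ?_
  refine (ae_restrict_iff' measurableSet_Ioc).2 (ae_of_all _ fun y hy => ?_)
  obtain ⟨hy1, hy2⟩ := hy
  have hylog : -Real.log 2 ≤ y := le_of_lt hy1
  have hlog2 : Real.log 2 < 1 := by
    nlinarith [Real.log_lt_sub_one_of_pos (by norm_num : (0:ℝ) < 2) (by norm_num : (2:ℝ) ≠ 1)]
  have habs_y : |y| ≤ 1 := abs_le.2 ⟨by linarith, hy2⟩
  by_cases hy0 : y = 0
  · simpa [hy0] using hK
  · have hy2pos : 0 < y ^ 2 := by positivity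
    have hden : y ^ 2 / 4 ≤ (Real.exp y - 1) ^ 2 := den_lb hylog
    have hexpneg : Real.exp (-y) ≤ 2 := by
      have h' : Real.exp (-y) ≤ Real.exp (Real.log 2) := Real.exp_le_exp.2 (by linarith)
      rwa [Real.exp_log (by norm_num : (0:ℝ) < 2)] at h'
    obtain ⟨num, hnum⟩ : ∃ n : ℝ, n = Real.exp (q * y) - 1 - q * (Real.exp y - 1) := ⟨_, rfl⟩
    have step1 : ‖num * Real.exp (-y) / (Real.exp y - 1) ^ 2‖ ≤ |num| * 2 / (y ^ 2 / 4) := by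
      rw [Real.norm_eq_abs, abs_div, abs_mul, abs_of_nonneg (Real.exp_pos (-y)).le,
        abs_pow, sq_abs]
      exact div_le_div₀ (by positivity)
        (mul_le_mul_of_nonneg_left hexpneg (abs_nonneg _)) (by positivity) hden
    have step2 : |num| * 2 / (y ^ 2 / 4) = 8 * |num| / y ^ 2 := by
      field_simp; ring
    have main : ‖num * Real.exp (-y) / (Real.exp y - 1) ^ 2‖ ≤ K := by
      rcases le_or_gt |y| δ with hcase | hcase
      · have hqy : |q * y| ≤ 1 := by
          rw [abs_mul]
          calc |q| * |y| ≤ |q| * δ := mul_le_mul_of_nonneg_left hcase (abs_nonneg q)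
            _ = |q| / (|q| + 1) := by rw [hδdef]; ring
            _ ≤ 1 := by rw [div_le_one (by positivity)]; linarith [abs_nonneg q]
        have n1 : |Real.exp (q * y) - 1 - q * y| ≤ (q * y) ^ 2 :=
          Real.abs_exp_sub_one_sub_id_le hqy
        have n2 : |Real.exp y - 1 - y| ≤ y ^ 2 := Real.abs_exp_sub_one_sub_id_le habs_y
        have hnumb : |num| ≤ (q ^ 2 + |q|) * y ^ 2 := by
          have hrw : num = (Real.exp (q * y) - 1 - q * y) - q * (Real.exp y - 1 - y) := by
            rw [hnum]; ring
          rw [hrw]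
          calc |(Real.exp (q * y) - 1 - q * y) - q * (Real.exp y - 1 - y)|
              ≤ |Real.exp (q * y) - 1 - q * y| + |q * (Real.exp y - 1 - y)| := abs_sub _ _
            _ = |Real.exp (q * y) - 1 - q * y| + |q| * |Real.exp y - 1 - y| := by rw [abs_mul]
            _ ≤ (q * y) ^ 2 + |q| * y ^ 2 := by gcongr
            _ = (q ^ 2 + |q|) * y ^ 2 := by ring
        calc ‖num * Real.exp (-y) / (Real.exp y - 1) ^ 2‖
            ≤ 8 * |num| / y ^ 2 := by rw [← step2]; exact step1
          _ ≤ 8 * (q ^ 2 + |q|) := by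
              rw [div_le_iff₀ hy2pos]
              linarith [hnumb]
          _ ≤ K := hK2
      · have hnumb : |num| ≤ N := by
          have h1 : Real.exp (q * y) ≤ Real.exp |q| := by
            apply Real.exp_le_exp.2
            calc q * y ≤ |q * y| := le_abs_self _
              _ = |q| * |y| := abs_mul q y
              _ ≤ |q| * 1 := mul_le_mul_of_nonneg_left habs_y (abs_nonneg q)
              _ = |q| := mul_one _
          have h2 : |Real.exp y - 1| ≤ Real.exp 1 + 1 := by
            have hey : Real.exp y ≤ Real.exp 1 := Real.exp_le_exp.2 hy2
            have hp : (0:ℝ) < Real.exp y := Real.exp_pos y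
            rw [abs_le]
            exact ⟨by linarith [Real.exp_pos 1], by linarith⟩
          have h3 : |q * (Real.exp y - 1)| ≤ |q| * (Real.exp 1 + 1) := by
            rw [abs_mul]
            exact mul_le_mul_of_nonneg_left h2 (abs_nonneg q)
          have he1 : |Real.exp (q * y) - 1| ≤ Real.exp |q| + 1 := by
            have hp : (0:ℝ) < Real.exp (q * y) := Real.exp_pos _
            rw [abs_le]
            exact ⟨by linarith [Real.exp_pos |q|], by linarith⟩
          calc |num| = |(Real.exp (q * y) - 1) - q * (Real.exp y - 1)| := by rw [hnum]
            _ ≤ |Real.exp (q * y) - 1| + |q * (Real.exp y - 1)| := abs_sub _ _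
            _ ≤ (Real.exp |q| + 1) + |q| * (Real.exp 1 + 1) := add_le_add he1 h3
            _ = N := by rw [hNdef]
        have hδy : δ ^ 2 ≤ y ^ 2 := by
          rw [← sq_abs y]
          exact pow_le_pow_left₀ hδ.le hcase.le 2
        calc ‖num * Real.exp (-y) / (Real.exp y - 1) ^ 2‖
            ≤ 8 * |num| / y ^ 2 := by rw [← step2]; exact step1
          _ ≤ 8 * N / δ ^ 2 :=
              div_le_div₀ (by positivity) (by linarith [hnumb]) (by positivity) hδy
          _ ≤ K := hK3
    simpa [hnum] using main

private lemma int_far {q : ℝ} (hq : q < 3) :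
    IntegrableOn
      (fun y : ℝ =>
        (Real.exp (q * y) - 1 - q * (Real.exp y - 1)) * Real.exp (-y) / (Real.exp y - 1) ^ 2)
      (Set.Ioi (1:ℝ)) := by
  obtain ⟨r, hrdef⟩ : ∃ s : ℝ, s = max q 1 := ⟨_, rfl⟩
  have hr1 : 1 ≤ r := hrdef ▸ le_max_right _ _
  have hqr : q ≤ r := hrdef ▸ le_max_left _ _
  have hr3 : r < 3 := hrdef ▸ max_lt hq (by norm_num)
  have hb : (0:ℝ) < 3 - r := by linarith
  refine Integrable.mono' (g := fun y => (8 + 8 * |q|) * Real.exp (-(3 - r) * y))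
    ((exp_neg_integrableOn_Ioi 1 hb).const_mul (8 + 8 * |q|))
    ((meas_f q).aestronglyMeasurable) ?_
  refine (ae_restrict_iff' measurableSet_Ioi).2 (ae_of_all _ fun y hy => ?_)
  have hy1 : (1:ℝ) < y := hy
  have hy0 : 0 < y := by linarith
  have he2 : (2:ℝ) ≤ Real.exp y := by
    have h1 : (2:ℝ) ≤ Real.exp 1 := by nlinarith [Real.add_one_le_exp 1]
    have := Real.exp_le_exp.2 hy1.le
    linarith
  have hden : (Real.exp y) ^ 2 / 4 ≤ (Real.exp y - 1) ^ 2 := by nlinarith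
  have hdenpos : (0:ℝ) < (Real.exp y) ^ 2 / 4 := by positivity
  have hnumb : |Real.exp (q * y) - 1 - q * (Real.exp y - 1)|
      ≤ (2 + 2 * |q|) * Real.exp (r * y) := by
    have e1 : Real.exp (q * y) ≤ Real.exp (r * y) :=
      Real.exp_le_exp.2 (by nlinarith)
    have e2 : (1:ℝ) ≤ Real.exp (r * y) := by
      rw [show (1:ℝ) = Real.exp 0 from (Real.exp_zero).symm]
      exact Real.exp_le_exp.2 (by nlinarith)
    have e3 : Real.exp y ≤ Real.exp (r * y) := Real.exp_le_exp.2 (by nlinarith)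
    have h2 : |Real.exp y - 1| ≤ Real.exp (r * y) + Real.exp (r * y) := by
      have hp : (0:ℝ) < Real.exp y := Real.exp_pos y
      rw [abs_le]
      exact ⟨by linarith, by linarith⟩
    have h3 : |q * (Real.exp y - 1)| ≤ |q| * (Real.exp (r * y) + Real.exp (r * y)) := by
      rw [abs_mul]
      exact mul_le_mul_of_nonneg_left h2 (abs_nonneg q)
    have he1 : |Real.exp (q * y) - 1| ≤ Real.exp (r * y) + Real.exp (r * y) := by
      have hp : (0:ℝ) < Real.exp (q * y) := Real.exp_pos _
      rw [abs_le]
      exact ⟨by linarith, by linarith⟩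
    calc |Real.exp (q * y) - 1 - q * (Real.exp y - 1)|
        ≤ |Real.exp (q * y) - 1| + |q * (Real.exp y - 1)| := abs_sub _ _
      _ ≤ (Real.exp (r * y) + Real.exp (r * y)) + |q| * (Real.exp (r * y) + Real.exp (r * y)) :=
          add_le_add he1 h3
      _ = (2 + 2 * |q|) * Real.exp (r * y) := by ring
  have hexp3 : Real.exp (-(3 - r) * y) * (Real.exp y * Real.exp y * Real.exp y)
      = Real.exp (r * y) := by
    rw [← Real.exp_add, ← Real.exp_add, ← Real.exp_add]
    congr 1
    ring
  have step1 : ‖(Real.exp (q * y) - 1 - q * (Real.exp y - 1)) * Real.exp (-y)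
        / (Real.exp y - 1) ^ 2‖
      ≤ ((2 + 2 * |q|) * Real.exp (r * y) * Real.exp (-y)) / ((Real.exp y) ^ 2 / 4) := by
    rw [Real.norm_eq_abs, abs_div, abs_mul, abs_of_nonneg (Real.exp_pos (-y)).le,
      abs_pow, sq_abs]
    exact div_le_div₀ (by positivity)
      (mul_le_mul_of_nonneg_right hnumb (Real.exp_pos (-y)).le) hdenpos hden
  have step2 : ((2 + 2 * |q|) * Real.exp (r * y) * Real.exp (-y)) / ((Real.exp y) ^ 2 / 4)
      = (8 + 8 * |q|) * Real.exp (-(3 - r) * y) := by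
    have heyne : Real.exp y ≠ 0 := (Real.exp_pos y).ne'
    rw [Real.exp_neg y, ← hexp3]
    field_simp
    ring
  calc ‖(Real.exp (q * y) - 1 - q * (Real.exp y - 1)) * Real.exp (-y)
        / (Real.exp y - 1) ^ 2‖
      ≤ ((2 + 2 * |q|) * Real.exp (r * y) * Real.exp (-y)) / ((Real.exp y) ^ 2 / 4) := step1
    _ = (8 + 8 * |q|) * Real.exp (-(3 - r) * y) := step2

theorem stmt_0 (q : ℝ) :
    IntegrableOn
      (fun y : ℝ =>
        (Real.exp (q * y) - 1 - q * (Real.exp y - 1)) * Real.exp (-y) / (Real.exp y - 1) ^ 2)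
      (Set.Ioi (-Real.log 2)) ↔ q < 3 := by
  constructor
  · intro h
    by_contra hq
    push_neg at hq
    have hq0 : (0:ℝ) < q := by linarith
    obtain ⟨A, hAdef⟩ : ∃ a : ℝ, a = max 1 (Real.log (4 * q)) := ⟨_, rfl⟩
    have hA1 : (1:ℝ) ≤ A := hAdef ▸ le_max_left _ _
    have hsub : Set.Ioi A ⊆ Set.Ioi (-Real.log 2) := by
      intro x hx
      have hlog2pos : 0 < Real.log 2 := Real.log_pos (by norm_num)
      simp only [Set.mem_Ioi] at *
      linarith
    have h' := h.mono_set hsub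
    have hbound : ∀ y ∈ Set.Ioi A, (1:ℝ)/2 ≤
        (Real.exp (q * y) - 1 - q * (Real.exp y - 1)) * Real.exp (-y) / (Real.exp y - 1) ^ 2 := by
      intro y hy
      have hyA : A < y := hy
      have hy1 : (1:ℝ) < y := lt_of_le_of_lt hA1 hyA
      have hy0 : (0:ℝ) < y := by linarith
      have heyq : 4 * q ≤ Real.exp y := by
        have h'' : Real.exp (Real.log (4 * q)) ≤ Real.exp y :=
          Real.exp_le_exp.2 (le_of_lt (lt_of_le_of_lt (hAdef ▸ le_max_right 1 _) hyA))
        rwa [Real.exp_log (by positivity)] at h''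
      have hey2 : (2:ℝ) ≤ Real.exp y := by
        have h1 : (2:ℝ) ≤ Real.exp 1 := by nlinarith [Real.add_one_le_exp 1]
        linarith [Real.exp_le_exp.2 hy1.le]
      have he3 : Real.exp (3 * y) = Real.exp y * Real.exp y * Real.exp y := by
        rw [← Real.exp_add, ← Real.exp_add]; congr 1; ring
      have heq3 : Real.exp (3 * y) ≤ Real.exp (q * y) :=
        Real.exp_le_exp.2 (by nlinarith)
      have hnum : Real.exp (3 * y) / 2 ≤ Real.exp (q * y) - 1 - q * (Real.exp y - 1) := by
        have h4 : q * Real.exp y ≤ Real.exp (3 * y) / 4 := by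
          rw [he3]; nlinarith
        have h5 : (1:ℝ) ≤ Real.exp (3 * y) / 4 := by
          rw [he3]; nlinarith
        nlinarith
      have hdle : (Real.exp y - 1) ^ 2 ≤ Real.exp y * Real.exp y := by nlinarith
      have hdpos : (0:ℝ) < (Real.exp y - 1) ^ 2 := by nlinarith
      have hkey : Real.exp (3 * y) / 2 * Real.exp (-y) / (Real.exp y * Real.exp y) = 1/2 := by
        rw [he3, Real.exp_neg]
        have heyne : Real.exp y ≠ 0 := (Real.exp_pos y).ne'
        field_simp
      have hcnn : (0:ℝ) ≤ (Real.exp (q * y) - 1 - q * (Real.exp y - 1)) * Real.exp (-y) :=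
        mul_nonneg (le_trans (by positivity) hnum) (Real.exp_pos (-y)).le
      calc (1:ℝ)/2 = Real.exp (3 * y) / 2 * Real.exp (-y) / (Real.exp y * Real.exp y) :=
            hkey.symm
        _ ≤ (Real.exp (q * y) - 1 - q * (Real.exp y - 1)) * Real.exp (-y) / (Real.exp y - 1) ^ 2 :=
            div_le_div₀ hcnn
              (mul_le_mul_of_nonneg_right hnum (Real.exp_pos (-y)).le) hdpos hdle
    have hconst : Integrable (fun _ : ℝ => (1:ℝ)/2) (volume.restrict (Set.Ioi A)) := by
      refine Integrable.mono h' aestronglyMeasurable_const ?_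
      refine (ae_restrict_iff' measurableSet_Ioi).2 (ae_of_all _ fun y hy => ?_)
      have hb := hbound y hy
      rw [Real.norm_eq_abs, Real.norm_eq_abs, abs_of_nonneg (by norm_num : (0:ℝ) ≤ 1/2)]
      exact le_trans hb (le_abs_self _)
    rw [integrable_const_iff] at hconst
    rcases hconst with h0 | hfin
    · norm_num at h0
    · rw [isFiniteMeasure_restrict, Real.volume_Ioi] at hfin
      exact absurd hfin (by simp)
  · intro hq
    have hsplit : Set.Ioi (-Real.log 2) = Set.Ioc (-Real.log 2) 1 ∪ Set.Ioi (1:ℝ) := by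
      rw [Set.Ioc_union_Ioi_eq_Ioi]
      have hlog2pos : 0 < Real.log 2 := Real.log_pos (by norm_num)
      linarith
    rw [hsplit]
    exact (int_near q).union (int_far hq)
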